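/- Let R be a commutative ring. Suppose that for each maximal ideal M of R there is a family (w_λ)_{λ∈Λ} of elements of R such that M is the internal direct sum of the cyclic ideals Rw_λ and for each λ the quotient ring R/Ann(w_λ) is a principal ideal ring. Then every prime ideal of R is a direct sum of cyclic R-modules. -/

import Mathlib

/-- An ideal `P` of a commutative ring `R` is an internal direct sum of cyclic
`R`-modules: there is a family of elements of `P` whose cyclic spans are
independent and whose supremum is `P`. -/
def IsDirectSumOfCyclics {R : Type} [CommRing R] (P : Ideal R) : Prop :=
  ∃ (ι : Type) (w : ι → R), (∀ i, w i ∈ P) ∧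
    iSupIndep (fun i => Ideal.span {w i}) ∧ (⨆ i, Ideal.span {w i}) = P

lemma key_cyclic {R : Type} [CommRing R] (w₀ : R)
    (hPIR : IsPrincipalIdealRing (R ⧸ Ideal.torsionOf R R w₀))
    (N : Ideal R) (hN : N ≤ Ideal.span {w₀}) :
    ∃ v ∈ Ideal.span ({w₀} : Set R), N = Ideal.span {v} := by
  classical
  set φ : R →ₗ[R] R := LinearMap.toSpanSingleton R R w₀ with hφ
  have hker : LinearMap.ker φ = Ideal.torsionOf R R w₀ := rfl
  set I : Ideal R := Submodule.comap φ N with hI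
  have hkerI : Ideal.torsionOf R R w₀ ≤ I := by
    intro x hx
    have : φ x = 0 := by rw [← hker] at hx; exact hx
    simp [hI, Submodule.mem_comap, this]
  set mk := Ideal.Quotient.mk (Ideal.torsionOf R R w₀) with hmk
  obtain ⟨a, ha⟩ := (hPIR.principal (Ideal.map mk I))
  obtain ⟨s, rfl⟩ := Ideal.Quotient.mk_surjective a
  rw [← hmk] at ha
  have hsurj : Function.Surjective mk := Ideal.Quotient.mk_surjective
  have hcomap : Ideal.comap mk (Ideal.map mk I) = I := by
    rw [Ideal.comap_map_of_surjective mk hsurj]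
    rw [← RingHom.ker_eq_comap_bot, Ideal.mk_ker]
    exact sup_eq_left.mpr hkerI
  have hspan : Ideal.span {mk s} = Ideal.map mk (Ideal.span {s}) := by
    rw [Ideal.map_span, Set.image_singleton]
  have ha' : Ideal.map mk I = Ideal.map mk (Ideal.span {s}) := by
    rw [← hspan]; exact ha
  have hIeq : I = Ideal.span {s} ⊔ Ideal.torsionOf R R w₀ := by
    rw [← hcomap, ha', Ideal.comap_map_of_surjective mk hsurj,
      ← RingHom.ker_eq_comap_bot, Ideal.mk_ker]
  have hrange : LinearMap.range φ = Ideal.span {w₀} :=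
    (LinearMap.span_singleton_eq_range R R w₀).symm
  have hNmap : Submodule.map φ I = N := by
    rw [hI, Submodule.map_comap_eq, hrange, inf_eq_right.mpr hN]
  refine ⟨s * w₀, Ideal.mul_mem_left _ _ (Ideal.subset_span rfl), ?_⟩
  rw [← hNmap, hIeq, Submodule.map_sup]
  have h1 : Submodule.map φ (Ideal.span {s}) = Ideal.span {s * w₀} := by
    rw [Ideal.span, Submodule.map_span, Set.image_singleton]
    simp [φ, LinearMap.toSpanSingleton_apply, smul_eq_mul]
  rw [h1]
  have h2 : Submodule.map φ (Ideal.torsionOf R R w₀) = ⊥ := by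
    rw [eq_bot_iff]
    rintro x ⟨y, hy, rfl⟩
    rw [← hker] at hy
    simpa using hy
  rw [h2, sup_bot_eq]

theorem primes_direct_sum_of_cyclics_of_maximals_decompose
    {R : Type} [CommRing R]
    (h : ∀ M : Ideal R, M.IsMaximal → ∃ (ι : Type) (w : ι → R),
      (∀ i, w i ∈ M) ∧ iSupIndep (fun i => Ideal.span {w i}) ∧
      (⨆ i, Ideal.span {w i}) = M ∧
      ∀ i, IsPrincipalIdealRing (R ⧸ Ideal.torsionOf R R (w i))) :
    ∀ P : Ideal R, P.IsPrime → IsDirectSumOfCyclics P := by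
  classical
  intro P hP
  obtain ⟨M, hM, hPM⟩ := Ideal.exists_le_maximal P hP.ne_top
  obtain ⟨ι, w, hwM, hindep, hsup, hPIR⟩ := h M hM
  by_cases hall : ∀ i, w i ∈ P
  · -- P = M
    have hMP : M ≤ P := by
      rw [← hsup]
      exact iSup_le fun i => Ideal.span_le.mpr (Set.singleton_subset_iff.mpr (hall i))
    have hPMeq : P = M := le_antisymm hPM hMP
    subst hPMeq
    exact ⟨ι, w, hwM, hindep, hsup⟩
  · push_neg at hall
    obtain ⟨i₀, hi₀⟩ := hall
    -- every other generator lies in P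
    have hother : ∀ i, i ≠ i₀ → w i ∈ P := by
      intro i hi
      by_contra hwi
      have hz : w i * w i₀ = 0 := by
        have h1 : w i * w i₀ ∈ Ideal.span {w i} :=
          Ideal.mul_mem_right _ _ (Ideal.subset_span rfl)
        have h2 : w i * w i₀ ∈ ⨆ j, ⨆ _ : j ≠ i, Ideal.span {w j} := by
          refine Submodule.mem_iSup_of_mem i₀ ?_
          refine Submodule.mem_iSup_of_mem (Ne.symm hi) ?_
          exact Ideal.mul_mem_left _ _ (Ideal.subset_span rfl)
        have hd := hindep i
        exact (Submodule.mem_bot R).mp (hd.le_bot ⟨h1, h2⟩)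
      rcases hP.mem_or_mem (show w i * w i₀ ∈ P by rw [hz]; exact P.zero_mem) with h' | h'
      · exact hwi h'
      · exact hi₀ h'
    -- the complement part
    set S : Ideal R := ⨆ i, ⨆ _ : i ≠ i₀, Ideal.span {w i} with hS
    have hSP : S ≤ P := by
      refine iSup_le fun i => iSup_le fun hi => ?_
      exact Ideal.span_le.mpr (Set.singleton_subset_iff.mpr (hother i hi))
    -- cyclic generator of P ⊓ span {w i₀}
    obtain ⟨v, hv, hNv⟩ := key_cyclic (w i₀) (hPIR i₀) (P ⊓ Ideal.span {w i₀}) inf_le_right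
    have hvP : v ∈ P := by
      have : v ∈ P ⊓ Ideal.span {w i₀} := by rw [hNv]; exact Ideal.subset_span rfl
      exact this.1
    refine ⟨ι, fun i => if i = i₀ then v else w i, ?_, ?_, ?_⟩
    · intro i
      by_cases hi : i = i₀
      · simp [hi, hvP]
      · simp [hi, hother i hi]
    · refine hindep.mono fun i => ?_
      by_cases hi : i = i₀ <;> simp [hi]
      exact hv
    · apply le_antisymm
      · refine iSup_le fun i => ?_
        by_cases hi : i = i₀
        · simp only [hi, if_pos rfl]
          exact Ideal.span_le.mpr (Set.singleton_subset_iff.mpr hvP)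
        · simp only [if_neg hi]
          exact Ideal.span_le.mpr (Set.singleton_subset_iff.mpr (hother i hi))
      · intro x hx
        have hxM : x ∈ Ideal.span {w i₀} ⊔ S := by
          have : x ∈ M := hPM hx
          rw [← hsup] at this
          refine (iSup_le fun i => ?_ : (⨆ i, Ideal.span {w i}) ≤ Ideal.span {w i₀} ⊔ S) this
          by_cases hi : i = i₀
          · subst hi; exact le_sup_left
          · exact le_trans (le_iSup₂ (f := fun j _ => Ideal.span {w j}) i hi) le_sup_right
        obtain ⟨y, hy, z, hz, rfl⟩ := Submodule.mem_sup.mp hxM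
        have hzP : z ∈ P := hSP hz
        have hyv : y ∈ Ideal.span {v} := by
          rw [← hNv]
          exact ⟨by simpa using P.sub_mem hx hzP, hy⟩
        have h1 : y ∈ ⨆ i, Ideal.span {(if i = i₀ then v else w i)} := by
          refine Submodule.mem_iSup_of_mem i₀ ?_
          simpa using hyv
        have h2 : z ∈ ⨆ i, Ideal.span {(if i = i₀ then v else w i)} := by
          refine (iSup_le fun i => iSup_le fun hi => ?_ :
            S ≤ ⨆ i, Ideal.span {(if i = i₀ then v else w i)}) hz
          refine le_iSup_of_le i ?_
          simp [hi]
        exact Submodule.add_mem _ h1 h2
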